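/- Let G be a group and let v_a, v_b, v_c, v_d ∈ G be pairwise distinct elements. Suppose (g₁, g₂, h₁, h₂) and (g₁', g₂', h₁', h₂') are two distinct quadruples in G⁴ each satisfying g₁ h₁ = v_b, g₂ h₁ = v_a, g₁ h₂ = v_c, g₂ h₂ = v_d (respectively with primes). Then the two sets of cells {g₁, g₂} × {h₁, h₂} and {g₁', g₂'} × {h₁', h₂'} are disjoint subsets of G × G. (That is, no two distinct quadrangles with the same four pairwise distinct corner values have a corner in common.) -/
import Mathlib


/-- Two distinct quadrangles with the same four pairwise distinct corner values
have no corner (cell of `G × G`) in common. -/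
theorem quadrangles_disjoint_corners {G : Type*} [Group G]
    (va vb vc vd : G)
    (hab : va ≠ vb) (hac : va ≠ vc) (had : va ≠ vd)
    (hbc : vb ≠ vc) (hbd : vb ≠ vd) (hcd : vc ≠ vd)
    (g₁ g₂ h₁ h₂ g₁' g₂' h₁' h₂' : G)
    (e1 : g₁ * h₁ = vb) (e2 : g₂ * h₁ = va) (e3 : g₁ * h₂ = vc) (e4 : g₂ * h₂ = vd)
    (e1' : g₁' * h₁' = vb) (e2' : g₂' * h₁' = va) (e3' : g₁' * h₂' = vc)
    (e4' : g₂' * h₂' = vd)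
    (hne : (g₁, g₂, h₁, h₂) ≠ (g₁', g₂', h₁', h₂')) :
    Disjoint (({g₁, g₂} : Set G) ×ˢ ({h₁, h₂} : Set G))
      (({g₁', g₂'} : Set G) ×ˢ ({h₁', h₂'} : Set G)) := by
  rw [Set.disjoint_left]
  rintro ⟨g, h⟩ ⟨hg, hh⟩ ⟨hg', hh'⟩
  simp only [Set.mem_insert_iff, Set.mem_singleton_iff] at hg hh hg' hh'
  apply hne
  subst va vb vc vd
  obtain rfl | rfl := hg <;> obtain rfl | rfl := hh <;>
    obtain h1 | h1 := hg' <;> obtain h2 | h2 := hh' <;> subst h1 <;> subst h2 <;>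
    simp_all [mul_left_cancel_iff, mul_right_cancel_iff, Prod.ext_iff]
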